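/- Weak law of large numbers for triangular arrays of weakly dependent random variables: Let (X_{n,k})_{k=1}^n, n ∈ ℕ, be a triangular array of row-wise (strictly) stationary, integrable ℝ^d-valued random variables on a probability space (Ω, 𝒜, P) such that lim_{K→∞} sup_{n∈ℕ} P(‖X_{n,1}‖_{l1} > K) = 0. Assume there are nonnegative coefficients (τ̄_r)_{r∈ℕ} with τ̄_r → 0 as r → ∞ such that for every n and all 1 ≤ j < k ≤ n there exists a random variable X̃_{n,k} with the same distribution as X_{n,k}, independent of X_{n,j}, satisfying E‖X_{n,k} − X̃_{n,k}‖_{l1} ≤ τ̄_{k−j}. Let g^{(n)} : ℝ^d → ℝ be measurable functions with E g^{(n)}(X_{n,1}) = 0 for all n, which are uniformly Lipschitz continuous on every bounded set (i.e., for every K > 0 there is L(K) < ∞ such that each g^{(n)} restricted to [−K, K]^d is L(K)-Lipschitz) and such that the sequence (g^{(n)}(X_{n,1}))_{n∈ℕ} is uniformly integrable. Then n^{-1} Σ_{k=1}^n g^{(n)}(X_{n,k}) converges to 0 in probability as n → ∞. -/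

import Mathlib

open MeasureTheory ProbabilityTheory Filter

private lemma wlln_clip_abs_le {c t : ℝ} (hc : 0 ≤ c) : |max (-c) (min c t)| ≤ c := by
  rw [abs_le]
  refine ⟨le_max_left _ _, max_le (by linarith) (min_le_left _ _)⟩

private lemma wlln_clip_eq {c t : ℝ} (h : |t| ≤ c) : max (-c) (min c t) = t := by
  rw [abs_le] at h
  rw [min_eq_right h.2, max_eq_right h.1]

private lemma wlln_clip_lip (c s t : ℝ) :
    |max (-c) (min c s) - max (-c) (min c t)| ≤ |s - t| := by
  have h1 : |min c s - min c t| ≤ max |c - c| |s - t| := abs_min_sub_min_le_max _ _ _ _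
  have h1' : max |c - c| |s - t| ≤ |s - t| := by
    rw [sub_self, abs_zero, max_eq_right (abs_nonneg _)]
  have h2 : |max (-c) (min c s) - max (-c) (min c t)| ≤ max |(-c) - (-c)| |min c s - min c t| :=
    abs_max_sub_max_le_max _ _ _ _
  have h2' : max |(-c) - (-c)| |min c s - min c t| ≤ |min c s - min c t| := by
    rw [sub_self, abs_zero, max_eq_right (abs_nonneg _)]
  exact h2.trans (h2'.trans (h1.trans h1'))

private lemma wlln_clip_meas (c : ℝ) : Measurable (fun t : ℝ => max (-c) (min c t)) :=
  measurable_const.max (measurable_const.min measurable_id)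

private lemma wlln_sum_tau_gt (τ : ℕ → ℝ) (hτ0 : ∀ r, 0 ≤ τ r) (j n : ℕ) :
    ∑ k ∈ Finset.Icc (j+1) n, τ (k - j) ≤ ∑ r ∈ Finset.Icc 1 n, τ r := by
  have himg := Finset.sum_image (s := Finset.Icc (j+1) n) (f := τ) (g := fun k => k - j)
    (by intro a ha b hb hab; simp only [Finset.mem_coe, Finset.mem_Icc] at ha hb; have hab2 : a - j = b - j := hab; omega)
  rw [← himg]
  refine Finset.sum_le_sum_of_subset_of_nonneg ?_ (fun r _ _ => hτ0 r)
  intro r hr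
  simp only [Finset.mem_image, Finset.mem_Icc] at hr ⊢
  obtain ⟨k, hk, rfl⟩ := hr; omega

private lemma wlln_sum_tau_lt (τ : ℕ → ℝ) (hτ0 : ∀ r, 0 ≤ τ r) (j n : ℕ) (hj : j ≤ n) :
    ∑ k ∈ Finset.Icc 1 (j-1), τ (j - k) ≤ ∑ r ∈ Finset.Icc 1 n, τ r := by
  have himg := Finset.sum_image (s := Finset.Icc 1 (j-1)) (f := τ) (g := fun k => j - k)
    (by intro a ha b hb hab; simp only [Finset.mem_coe, Finset.mem_Icc] at ha hb; have hab2 : j - a = j - b := hab; omega)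
  rw [← himg]
  refine Finset.sum_le_sum_of_subset_of_nonneg ?_ (fun r _ _ => hτ0 r)
  intro r hr
  simp only [Finset.mem_image, Finset.mem_Icc] at hr ⊢
  obtain ⟨k, hk, rfl⟩ := hr; omega

private lemma wlln_clip_err {c t : ℝ} (hc : 0 ≤ c) : |t - max (-c) (min c t)| ≤ |t| := by
  rcases le_total 0 t with h | h
  · have h0 : 0 ≤ min c t := le_min hc h
    rw [max_eq_right (by linarith : -c ≤ min c t)]
    have h1 : min c t ≤ t := min_le_right _ _
    rw [abs_of_nonneg (by linarith), abs_of_nonneg h]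
    linarith
  · rw [min_eq_right (by linarith : t ≤ c)]
    rcases le_total (-c) t with h2 | h2
    · rw [max_eq_right h2]; simp
    · rw [max_eq_left h2, abs_of_nonpos (by linarith), abs_of_nonpos h]
      linarith

/-- Weak law of large numbers for triangular arrays of row-wise stationary, τ-weakly
dependent `ℝ^d`-valued random variables: if the array is uniformly tight, admits an
`L¹`-coupling with coefficients `τ̄_r → 0`, and the centered functions `g^{(n)}` are
uniformly Lipschitz on bounded sets with `(g^{(n)}(X_{n,1}))_n` uniformly integrable,
then `n⁻¹ ∑_{k=1}^n g^{(n)}(X_{n,k}) → 0` in probability. -/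
theorem wlln_triangular_tau_dependent
    {Ω : Type*} [MeasureSpace Ω] [IsProbabilityMeasure (ℙ : Measure Ω)]
    (d : ℕ) (X : ℕ → ℕ → Ω → (Fin d → ℝ))
    (hXmeas : ∀ n k, Measurable (X n k))
    (hXint : ∀ n k, 1 ≤ k → k ≤ n → Integrable (fun ω => ∑ i, |X n k ω i|) ℙ)
    -- row-wise strict stationarity
    (hstat : ∀ n m (k : Fin m → ℕ) (l : ℕ), (∀ i, 1 ≤ k i) → (∀ i, k i + l ≤ n) →
      Measure.map (fun ω i => X n (k i + l) ω) ℙ = Measure.map (fun ω i => X n (k i) ω) ℙ)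
    -- uniform tightness: lim_{K→∞} sup_n P(‖X_{n,1}‖_{l1} > K) = 0
    (htight : ∀ ε > (0 : ℝ), ∃ K : ℝ, ∀ n : ℕ,
      (ℙ {ω | K < ∑ i, |X n 1 ω i|}).toReal ≤ ε)
    -- τ-dependence coupling coefficients
    (τ : ℕ → ℝ) (hτ0 : ∀ r, 0 ≤ τ r) (hτ : Tendsto τ atTop (nhds 0))
    (hcoupling : ∀ n j k, 1 ≤ j → j < k → k ≤ n →
      ∃ Xt : Ω → (Fin d → ℝ), Measurable Xt ∧
        Measure.map Xt ℙ = Measure.map (X n k) ℙ ∧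
        IndepFun (X n j) Xt ℙ ∧
        ∫ ω, ∑ i, |X n k ω i - Xt ω i| ∂ℙ ≤ τ (k - j))
    -- centered functions, uniformly Lipschitz on bounded sets, uniformly integrable
    (g : ℕ → (Fin d → ℝ) → ℝ) (hgmeas : ∀ n, Measurable (g n))
    (hgint : ∀ n, Integrable (fun ω => g n (X n 1 ω)) ℙ)
    (hgcent : ∀ n, ∫ ω, g n (X n 1 ω) ∂ℙ = 0)
    (hgLip : ∀ K > (0 : ℝ), ∃ L : ℝ, ∀ n (x y : Fin d → ℝ),
      (∀ i, |x i| ≤ K) → (∀ i, |y i| ≤ K) → |g n x - g n y| ≤ L * ∑ i, |x i - y i|)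
    (hgui : ∀ ε > (0 : ℝ), ∃ M : ℝ, ∀ n,
      ∫ ω in {ω | M < |g n (X n 1 ω)|}, |g n (X n 1 ω)| ∂ℙ ≤ ε) :
    ∀ ε > (0 : ℝ), Tendsto
      (fun n : ℕ => ℙ {ω | ε < |(n : ℝ)⁻¹ * ∑ k ∈ Finset.Icc 1 n, g n (X n k ω)|})
      atTop (nhds 0) := by
  -- identical distribution within rows
  have hident : ∀ n k, 1 ≤ k → k ≤ n →
      Measure.map (X n k) ℙ = Measure.map (X n 1) ℙ := by
    intro n k hk1 hkn
    have h := hstat n 1 (fun _ => 1) (k - 1) (fun _ => le_refl 1)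
      (fun _ => (by omega : 1 + (k - 1) ≤ n))
    have hk : 1 + (k - 1) = k := by omega
    simp only [hk] at h
    have hm : ∀ m, Measurable (fun ω (_ : Fin 1) => X n m ω) :=
      fun m => measurable_pi_lambda _ (fun _ => hXmeas n m)
    have he : Measurable (fun f : Fin 1 → Fin d → ℝ => f 0) := measurable_pi_apply 0
    calc Measure.map (X n k) ℙ
        = Measure.map (fun f : Fin 1 → Fin d → ℝ => f 0)
            (Measure.map (fun ω (_ : Fin 1) => X n k ω) ℙ) := by
          rw [Measure.map_map he (hm k)]; rfl
      _ = Measure.map (fun f : Fin 1 → Fin d → ℝ => f 0)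
            (Measure.map (fun ω (_ : Fin 1) => X n 1 ω) ℙ) := by rw [h]
      _ = Measure.map (X n 1) ℙ := by rw [Measure.map_map he (hm 1)]; rfl
  have htransfer : ∀ n k (F : (Fin d → ℝ) → ℝ), Measurable F → 1 ≤ k → k ≤ n →
      ∫ ω, F (X n k ω) ∂ℙ = ∫ ω, F (X n 1 ω) ∂ℙ := by
    intro n k F hF hk1 hkn
    rw [← integral_map (hXmeas n k).aemeasurable hF.aestronglyMeasurable, hident n k hk1 hkn,
      integral_map (hXmeas n 1).aemeasurable hF.aestronglyMeasurable]
  have hint_transfer : ∀ n k (F : (Fin d → ℝ) → ℝ), Measurable F → 1 ≤ k → k ≤ n →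
      Integrable (fun ω => F (X n 1 ω)) ℙ → Integrable (fun ω => F (X n k ω)) ℙ := by
    intro n k F hF hk1 hkn h1
    have h2 : Integrable F (Measure.map (X n 1) ℙ) :=
      (integrable_map_measure hF.aestronglyMeasurable (hXmeas n 1).aemeasurable).2 h1
    rw [← hident n k hk1 hkn] at h2
    exact (integrable_map_measure hF.aestronglyMeasurable (hXmeas n k).aemeasurable).1 h2
  intro ε hε
  rw [ENNReal.tendsto_atTop_zero]
  intro δ hδ
  obtain ⟨δ', hδ'pos, hδ'le⟩ : ∃ δ' : ℝ, 0 < δ' ∧ ENNReal.ofReal δ' ≤ δ := by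
    rcases eq_or_ne δ ⊤ with hd | hd
    · exact ⟨1, one_pos, by simp [hd]⟩
    · exact ⟨δ.toReal, ENNReal.toReal_pos hδ.ne' hd, by rw [ENNReal.ofReal_toReal hd]⟩
  have hε₀pos : 0 < ε * δ' / 48 := by positivity
  set ε₀ : ℝ := ε * δ' / 48 with hε₀def
  -- choose M from uniform integrability
  obtain ⟨M₀, hM₀⟩ := hgui ε₀ hε₀pos
  set M : ℝ := max M₀ 1 with hMdef
  have hM1 : (1:ℝ) ≤ M := le_max_right _ _
  have hMpos : (0:ℝ) < M := lt_of_lt_of_le one_pos hM1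
  have hMui : ∀ n, ∫ ω in {ω | M < |g n (X n 1 ω)|}, |g n (X n 1 ω)| ∂ℙ ≤ ε₀ := by
    intro n
    refine le_trans (setIntegral_mono_set ((hgint n).abs.integrableOn)
      (Filter.Eventually.of_forall fun ω => abs_nonneg _)
      (HasSubset.Subset.eventuallyLE ?_)) (hM₀ n)
    intro ω hω
    simp only [Set.mem_setOf_eq] at hω ⊢
    exact lt_of_le_of_lt (le_max_left _ _) hω
  -- choose K from tightness
  obtain ⟨K₀, hK₀⟩ := htight (ε₀ / M) (by positivity)
  set K : ℝ := max K₀ 1 with hKdef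
  have hK1 : (1:ℝ) ≤ K := le_max_right _ _
  have hKpos : (0:ℝ) < K := lt_of_lt_of_le one_pos hK1
  have hKtight : ∀ n, (ℙ {ω | K < ∑ i, |X n 1 ω i|}).toReal ≤ ε₀ / M := by
    intro n
    refine le_trans ?_ (hK₀ n)
    refine ENNReal.toReal_mono (measure_ne_top _ _) (measure_mono ?_)
    intro ω hω
    simp only [Set.mem_setOf_eq] at hω ⊢
    exact lt_of_le_of_lt (le_max_left _ _) hω
  obtain ⟨L₀, hL₀⟩ := hgLip K hKpos
  set L : ℝ := max L₀ 0 with hLdef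
  have hL0 : (0:ℝ) ≤ L := le_max_right _ _
  -- truncation maps
  set φ : (Fin d → ℝ) → (Fin d → ℝ) := fun x i => max (-K) (min K (x i)) with hφdef
  have hφmeas : Measurable φ :=
    measurable_pi_lambda _ fun i => (wlln_clip_meas K).comp (measurable_pi_apply i)
  have hφbdd : ∀ x (i : Fin d), |φ x i| ≤ K := fun x i => wlln_clip_abs_le (t := x i) hKpos.le
  have hφlip : ∀ x y (i : Fin d), |φ x i - φ y i| ≤ |x i - y i| := fun x y i => wlln_clip_lip K _ _
  have hφid : ∀ x : Fin d → ℝ, (∑ i, |x i|) ≤ K → φ x = x := by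
    intro x hx; funext i
    exact wlln_clip_eq (le_trans (Finset.single_le_sum (f := fun i => |x i|)
      (fun i _ => abs_nonneg _) (Finset.mem_univ i)) hx)
  set b : ℕ → (Fin d → ℝ) → ℝ := fun n x => max (-M) (min M (g n (φ x))) with hbdef
  have hbmeas : ∀ n, Measurable (b n) := fun n => (wlln_clip_meas M).comp ((hgmeas n).comp hφmeas)
  have hbbdd : ∀ n x, |b n x| ≤ M := fun n x => wlln_clip_abs_le hMpos.le
  have hblip : ∀ n x y, |b n x - b n y| ≤ L * ∑ i, |x i - y i| := by
    intro n x y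
    refine le_trans (wlln_clip_lip M _ _) ?_
    refine le_trans (hL₀ n (φ x) (φ y) (hφbdd x) (hφbdd y)) ?_
    have h1 : L₀ * ∑ i, |φ x i - φ y i| ≤ L * ∑ i, |φ x i - φ y i| :=
      mul_le_mul_of_nonneg_right (le_max_left _ _) (Finset.sum_nonneg fun i _ => abs_nonneg _)
    exact h1.trans (mul_le_mul_of_nonneg_left (Finset.sum_le_sum fun i _ => hφlip x y i) hL0)
  have hbint : ∀ n k, Integrable (fun ω => b n (X n k ω)) ℙ := by
    intro n k
    refine Integrable.mono' (integrable_const M)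
      (((hbmeas n).comp (hXmeas n k)).aestronglyMeasurable)
      (Filter.Eventually.of_forall fun ω => ?_)
    simpa [Real.norm_eq_abs] using hbbdd n (X n k ω)
  have hgkint : ∀ n k, 1 ≤ k → k ≤ n → Integrable (fun ω => g n (X n k ω)) ℙ :=
    fun n k hk1 hkn => hint_transfer n k (g n) (hgmeas n) hk1 hkn (hgint n)
  -- L¹ bound on the remainder at k = 1
  have hr1 : ∀ n, ∫ ω, |g n (X n 1 ω) - b n (X n 1 ω)| ∂ℙ ≤ 3 * ε₀ := by
    intro n
    have hGmeas : Measurable (fun ω => g n (X n 1 ω)) := (hgmeas n).comp (hXmeas n 1)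
    have hS1 : MeasurableSet {ω | M < |g n (X n 1 ω)|} :=
      measurableSet_lt measurable_const hGmeas.abs
    have hXsum_meas : Measurable (fun ω => ∑ i, |X n 1 ω i|) :=
      Finset.measurable_sum _ fun i _ => ((measurable_pi_apply i).comp (hXmeas n 1)).abs
    have hS2 : MeasurableSet {ω | K < ∑ i, |X n 1 ω i|} :=
      measurableSet_lt measurable_const hXsum_meas
    have hptw : ∀ ω, |g n (X n 1 ω) - b n (X n 1 ω)| ≤
        Set.indicator {ω | M < |g n (X n 1 ω)|} (fun ω => |g n (X n 1 ω)|) ω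
          + Set.indicator {ω | K < ∑ i, |X n 1 ω i|} (fun _ => 2*M) ω := by
      intro ω
      have htri : |g n (X n 1 ω) - b n (X n 1 ω)| ≤
          |g n (X n 1 ω) - max (-M) (min M (g n (X n 1 ω)))|
            + |max (-M) (min M (g n (X n 1 ω))) - b n (X n 1 ω)| := abs_sub_le _ _ _
      have h1 : |g n (X n 1 ω) - max (-M) (min M (g n (X n 1 ω)))| ≤
          Set.indicator {ω | M < |g n (X n 1 ω)|} (fun ω => |g n (X n 1 ω)|) ω := by
        by_cases hmem : M < |g n (X n 1 ω)|
        · rw [Set.indicator_of_mem (show ω ∈ {ω | M < |g n (X n 1 ω)|} from hmem)]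
          exact wlln_clip_err hMpos.le
        · rw [Set.indicator_of_notMem (show ω ∉ {ω | M < |g n (X n 1 ω)|} from hmem),
            wlln_clip_eq (le_of_not_gt hmem)]
          simp
      have h2 : |max (-M) (min M (g n (X n 1 ω))) - b n (X n 1 ω)| ≤
          Set.indicator {ω | K < ∑ i, |X n 1 ω i|} (fun _ => 2*M) ω := by
        by_cases hmem : K < ∑ i, |X n 1 ω i|
        · rw [Set.indicator_of_mem (show ω ∈ {ω | K < ∑ i, |X n 1 ω i|} from hmem)]
          refine le_trans (abs_sub _ _) ?_
          have hb1 : |max (-M) (min M (g n (X n 1 ω)))| ≤ M := wlln_clip_abs_le hMpos.le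
          have hb2 : |b n (X n 1 ω)| ≤ M := hbbdd n (X n 1 ω)
          linarith
        · rw [Set.indicator_of_notMem (show ω ∉ {ω | K < ∑ i, |X n 1 ω i|} from hmem)]
          have hid : φ (X n 1 ω) = X n 1 ω := hφid _ (le_of_not_gt hmem)
          have : b n (X n 1 ω) = max (-M) (min M (g n (X n 1 ω))) := by
            rw [hbdef]; simp only [hid]
          rw [this]
          simp
      calc |g n (X n 1 ω) - b n (X n 1 ω)| ≤ _ + _ := htri
        _ ≤ _ := add_le_add h1 h2
    have hintl : Integrable (fun ω => |g n (X n 1 ω) - b n (X n 1 ω)|) ℙ :=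
      ((hgint n).sub (hbint n 1)).abs
    have hintr1 : Integrable
        (fun ω => Set.indicator {ω | M < |g n (X n 1 ω)|} (fun ω => |g n (X n 1 ω)|) ω) ℙ :=
      (hgint n).abs.indicator hS1
    have hintr2 : Integrable
        (fun ω => Set.indicator {ω | K < ∑ i, |X n 1 ω i|} (fun _ => (2*M : ℝ)) ω) ℙ :=
      (integrable_const (2*M)).indicator hS2
    calc ∫ ω, |g n (X n 1 ω) - b n (X n 1 ω)| ∂ℙ
        ≤ ∫ ω, (Set.indicator {ω | M < |g n (X n 1 ω)|} (fun ω => |g n (X n 1 ω)|) ω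
            + Set.indicator {ω | K < ∑ i, |X n 1 ω i|} (fun _ => 2*M) ω) ∂ℙ :=
          integral_mono hintl (hintr1.add hintr2) hptw
      _ = (∫ ω, Set.indicator {ω | M < |g n (X n 1 ω)|} (fun ω => |g n (X n 1 ω)|) ω ∂ℙ)
            + ∫ ω, Set.indicator {ω | K < ∑ i, |X n 1 ω i|} (fun _ => 2*M) ω ∂ℙ :=
          integral_add hintr1 hintr2
      _ ≤ ε₀ + 2 * ε₀ := by
          refine add_le_add ?_ ?_
          · rw [integral_indicator hS1]
            exact hMui n
          · rw [integral_indicator_const (2*M) hS2, smul_eq_mul]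
            calc (ℙ {ω | K < ∑ i, |X n 1 ω i|}).toReal * (2*M)
                ≤ (ε₀ / M) * (2*M) := by
                  refine mul_le_mul_of_nonneg_right (hKtight n) (by positivity)
              _ = 2 * ε₀ := by field_simp
      _ = 3 * ε₀ := by ring
  have hrk : ∀ n k, 1 ≤ k → k ≤ n →
      ∫ ω, |g n (X n k ω) - b n (X n k ω)| ∂ℙ ≤ 3 * ε₀ := by
    intro n k hk1 hkn
    have ht := htransfer n k (fun x => |g n x - b n x|) (((hgmeas n).sub (hbmeas n)).abs) hk1 hkn
    rw [ht]; exact hr1 n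
  -- centering constant
  set c : ℕ → ℝ := fun n => ∫ ω, b n (X n 1 ω) ∂ℙ with hcdef
  have hcbound : ∀ n, |c n| ≤ 3 * ε₀ := by
    intro n
    have h0 : c n = ∫ ω, (b n (X n 1 ω) - g n (X n 1 ω)) ∂ℙ := by
      rw [integral_sub (hbint n 1) (hgint n), hgcent n, sub_zero]
    rw [h0, ← Real.norm_eq_abs]
    refine le_trans ?_ (hr1 n)
    refine le_trans (norm_integral_le_integral_norm _) (le_of_eq ?_)
    refine integral_congr_ae (Filter.Eventually.of_forall fun ω => ?_)
    simp only [Real.norm_eq_abs, abs_sub_comm]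
  have hcM : ∀ n, |c n| ≤ M := by
    intro n
    rw [show |c n| = ‖∫ ω, b n (X n 1 ω) ∂ℙ‖ from by rw [Real.norm_eq_abs, hcdef]]
    refine le_trans (norm_integral_le_integral_norm _) ?_
    calc ∫ ω, ‖b n (X n 1 ω)‖ ∂ℙ ≤ ∫ _ω, M ∂ℙ :=
          integral_mono (hbint n 1).norm (integrable_const M)
            (fun ω => by simpa [Real.norm_eq_abs] using hbbdd n (X n 1 ω))
      _ = M := by simp
  -- centered bounded variables
  set Y : ℕ → ℕ → Ω → ℝ := fun n k ω => b n (X n k ω) - c n with hYdef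
  have hYmeas : ∀ n k, Measurable (Y n k) :=
    fun n k => ((hbmeas n).comp (hXmeas n k)).sub measurable_const
  have hYbdd : ∀ n k ω, |Y n k ω| ≤ 2 * M := by
    intro n k ω
    refine le_trans (abs_sub _ _) ?_
    have := hbbdd n (X n k ω); have := hcM n; linarith
  have hYint : ∀ n k, Integrable (Y n k) ℙ := fun n k => (hbint n k).sub (integrable_const _)
  have hYmean : ∀ n k, 1 ≤ k → k ≤ n → ∫ ω, Y n k ω ∂ℙ = 0 := by
    intro n k hk1 hkn
    rw [hYdef]
    simp only
    rw [integral_sub (hbint n k) (integrable_const _), integral_const,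
      htransfer n k (b n) (hbmeas n) hk1 hkn]
    simp [hcdef]
  have hYprodint : ∀ n j k, Integrable (fun ω => Y n j ω * Y n k ω) ℙ := by
    intro n j k
    refine Integrable.mono' (integrable_const ((2*M)*(2*M)))
      (((hYmeas n j).mul (hYmeas n k)).aestronglyMeasurable)
      (Filter.Eventually.of_forall fun ω => ?_)
    rw [Real.norm_eq_abs, abs_mul]
    exact mul_le_mul (hYbdd n j ω) (hYbdd n k ω) (abs_nonneg _) (by positivity)
  -- covariance bound
  have hcov : ∀ n j k, 1 ≤ j → j < k → k ≤ n →
      ∫ ω, Y n j ω * Y n k ω ∂ℙ ≤ 2*M*L*τ (k - j) := by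
    intro n j k hj1 hjk hkn
    obtain ⟨Xt, hXtm, hXtmap, hXtind, hXtτ⟩ := hcoupling n j k hj1 hjk hkn
    have hZmeas : Measurable (fun ω => b n (Xt ω) - c n) :=
      ((hbmeas n).comp hXtm).sub measurable_const
    have hZbdd : ∀ ω, |b n (Xt ω) - c n| ≤ 2*M := by
      intro ω
      refine le_trans (abs_sub _ _) ?_
      have := hbbdd n (Xt ω); have := hcM n; linarith
    have hZint : Integrable (fun ω => b n (Xt ω) - c n) ℙ := by
      refine Integrable.mono' (integrable_const (2*M)) hZmeas.aestronglyMeasurable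
        (Filter.Eventually.of_forall fun ω => ?_)
      simpa [Real.norm_eq_abs] using hZbdd ω
    have hbXt : ∫ ω, b n (Xt ω) ∂ℙ = ∫ ω, b n (X n k ω) ∂ℙ := by
      rw [← integral_map hXtm.aemeasurable (hbmeas n).aestronglyMeasurable, hXtmap,
        integral_map (hXmeas n k).aemeasurable (hbmeas n).aestronglyMeasurable]
    have hbXtint : Integrable (fun ω => b n (Xt ω)) ℙ := by
      refine Integrable.mono' (integrable_const M)
        (((hbmeas n).comp hXtm).aestronglyMeasurable)
        (Filter.Eventually.of_forall fun ω => ?_)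
      simpa [Real.norm_eq_abs] using hbbdd n (Xt ω)
    have hZmean : ∫ ω, (b n (Xt ω) - c n) ∂ℙ = 0 := by
      rw [integral_sub hbXtint (integrable_const _), integral_const, hbXt,
        htransfer n k (b n) (hbmeas n) (by omega) hkn]
      simp [hcdef]
    have hind : IndepFun (Y n j) (fun ω => b n (Xt ω) - c n) ℙ := by
      have := hXtind.comp (φ := fun v => b n v - c n) (ψ := fun v => b n v - c n)
        ((hbmeas n).sub measurable_const) ((hbmeas n).sub measurable_const)
      exact this
    have hmul0 : ∫ ω, Y n j ω * (b n (Xt ω) - c n) ∂ℙ = 0 := by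
      have h := IndepFun.integral_mul_eq_mul_integral hind (hYmeas n j).aestronglyMeasurable hZmeas.aestronglyMeasurable
      have h2 : ∫ ω, Y n j ω * (b n (Xt ω) - c n) ∂ℙ
          = (∫ ω, Y n j ω ∂ℙ) * ∫ ω, (b n (Xt ω) - c n) ∂ℙ := h
      rw [h2, hYmean n j hj1 (by omega), zero_mul]
    have hprodint1 : Integrable (fun ω => Y n j ω * (Y n k ω - (b n (Xt ω) - c n))) ℙ := by
      refine Integrable.mono' (integrable_const ((2*M)*(2*M+2*M)))
        (((hYmeas n j).mul ((hYmeas n k).sub hZmeas)).aestronglyMeasurable)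
        (Filter.Eventually.of_forall fun ω => ?_)
      rw [Real.norm_eq_abs, abs_mul]
      refine mul_le_mul (hYbdd n j ω) (le_trans (abs_sub _ _) ?_) (abs_nonneg _) (by positivity)
      have := hYbdd n k ω; have := hZbdd ω; linarith
    have hprodint2 : Integrable (fun ω => Y n j ω * (b n (Xt ω) - c n)) ℙ := by
      refine Integrable.mono' (integrable_const ((2*M)*(2*M)))
        (((hYmeas n j).mul hZmeas).aestronglyMeasurable)
        (Filter.Eventually.of_forall fun ω => ?_)
      rw [Real.norm_eq_abs, abs_mul]
      exact mul_le_mul (hYbdd n j ω) (hZbdd ω) (abs_nonneg _) (by positivity)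
    have hsplit : ∫ ω, Y n j ω * Y n k ω ∂ℙ
        = ∫ ω, Y n j ω * (Y n k ω - (b n (Xt ω) - c n)) ∂ℙ := by
      have hfe : (fun ω => Y n j ω * Y n k ω)
          = fun ω => Y n j ω * (Y n k ω - (b n (Xt ω) - c n)) + Y n j ω * (b n (Xt ω) - c n) := by
        funext ω; ring
      rw [hfe, integral_add hprodint1 hprodint2, hmul0, add_zero]
    -- integrability of the coupled distance
    have hFm : Measurable (fun v : Fin d → ℝ => ∑ i, |v i|) :=
      Finset.measurable_sum _ fun i _ => (measurable_pi_apply i).abs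
    have hXtsum_int : Integrable (fun ω => ∑ i, |Xt ω i|) ℙ := by
      have h1 : Integrable (fun v : Fin d → ℝ => ∑ i, |v i|) (Measure.map (X n k) ℙ) :=
        (integrable_map_measure hFm.aestronglyMeasurable (hXmeas n k).aemeasurable).2
          (hXint n k (by omega) hkn)
      rw [← hXtmap] at h1
      exact (integrable_map_measure hFm.aestronglyMeasurable hXtm.aemeasurable).1 h1
    have hdist_meas : Measurable (fun ω => ∑ i, |X n k ω i - Xt ω i|) :=
      Finset.measurable_sum _ fun i _ =>
        (((measurable_pi_apply i).comp (hXmeas n k)).sub ((measurable_pi_apply i).comp hXtm)).abs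
    have hdist_int : Integrable (fun ω => ∑ i, |X n k ω i - Xt ω i|) ℙ := by
      refine Integrable.mono' ((hXint n k (by omega) hkn).add hXtsum_int)
        hdist_meas.aestronglyMeasurable (Filter.Eventually.of_forall fun ω => ?_)
      rw [Real.norm_eq_abs, abs_of_nonneg (Finset.sum_nonneg fun i _ => abs_nonneg _),
        Pi.add_apply, ← Finset.sum_add_distrib]
      exact Finset.sum_le_sum fun i _ => abs_sub _ _
    have hdiff_int : Integrable (fun ω => |b n (X n k ω) - b n (Xt ω)|) ℙ := by
      refine Integrable.mono' (integrable_const (2*M))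
        ((((hbmeas n).comp (hXmeas n k)).sub ((hbmeas n).comp hXtm)).abs.aestronglyMeasurable)
        (Filter.Eventually.of_forall fun ω => ?_)
      rw [Real.norm_eq_abs, abs_abs]
      refine le_trans (abs_sub _ _) ?_
      have := hbbdd n (X n k ω); have := hbbdd n (Xt ω); linarith
    have hkey : ∫ ω, |b n (X n k ω) - b n (Xt ω)| ∂ℙ ≤ L * τ (k - j) := by
      calc ∫ ω, |b n (X n k ω) - b n (Xt ω)| ∂ℙ
          ≤ ∫ ω, L * ∑ i, |X n k ω i - Xt ω i| ∂ℙ :=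
            integral_mono hdiff_int (hdist_int.const_mul L)
              (fun ω => hblip n (X n k ω) (Xt ω))
        _ = L * ∫ ω, ∑ i, |X n k ω i - Xt ω i| ∂ℙ := integral_const_mul _ _
        _ ≤ L * τ (k - j) := mul_le_mul_of_nonneg_left hXtτ hL0
    calc ∫ ω, Y n j ω * Y n k ω ∂ℙ
        = ∫ ω, Y n j ω * (Y n k ω - (b n (Xt ω) - c n)) ∂ℙ := hsplit
      _ ≤ ∫ ω, (2*M) * |b n (X n k ω) - b n (Xt ω)| ∂ℙ := by
          refine integral_mono hprodint1 (hdiff_int.const_mul (2*M))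
            (fun ω => ?_)
          have heq : Y n k ω - (b n (Xt ω) - c n) = b n (X n k ω) - b n (Xt ω) := by
            rw [hYdef]; ring
          calc Y n j ω * (Y n k ω - (b n (Xt ω) - c n))
              ≤ |Y n j ω * (Y n k ω - (b n (Xt ω) - c n))| := le_abs_self _
            _ = |Y n j ω| * |b n (X n k ω) - b n (Xt ω)| := by rw [abs_mul, heq]
            _ ≤ (2*M) * |b n (X n k ω) - b n (Xt ω)| :=
                mul_le_mul_of_nonneg_right (hYbdd n j ω) (abs_nonneg _)
      _ = (2*M) * ∫ ω, |b n (X n k ω) - b n (Xt ω)| ∂ℙ := integral_const_mul _ _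
      _ ≤ (2*M) * (L * τ (k - j)) := mul_le_mul_of_nonneg_left hkey (by positivity)
      _ = 2*M*L*τ (k - j) := by ring
  -- diagonal bound
  have hdiag : ∀ n k, ∫ ω, Y n k ω * Y n k ω ∂ℙ ≤ (2*M)*(2*M) := by
    intro n k
    calc ∫ ω, Y n k ω * Y n k ω ∂ℙ ≤ ∫ _ω, (2*M)*(2*M) ∂ℙ := by
          refine integral_mono (hYprodint n k k) (integrable_const _) (fun ω => ?_)
          calc Y n k ω * Y n k ω ≤ |Y n k ω * Y n k ω| := le_abs_self _
            _ = |Y n k ω| * |Y n k ω| := abs_mul _ _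
            _ ≤ (2*M)*(2*M) :=
                mul_le_mul (hYbdd n k ω) (hYbdd n k ω) (abs_nonneg _) (by positivity)
      _ = (2*M)*(2*M) := by simp
  set T : ℕ → ℝ := fun n => ∑ r ∈ Finset.Icc 1 n, τ r with hTdef
  have hT0 : ∀ n, 0 ≤ T n := fun n => Finset.sum_nonneg fun r _ => hτ0 r
  have hsum2 : ∀ n, ∫ ω, (∑ k ∈ Finset.Icc 1 n, Y n k ω)^2 ∂ℙ ≤
      (n:ℝ) * ((2*M)*(2*M) + 2*M*L*(2 * T n)) := by
    intro n
    have hrw : (fun ω => (∑ k ∈ Finset.Icc 1 n, Y n k ω)^2)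
        = fun ω => ∑ j ∈ Finset.Icc 1 n, ∑ k ∈ Finset.Icc 1 n, Y n j ω * Y n k ω := by
      funext ω; rw [sq, Finset.sum_mul_sum]
    rw [hrw]
    rw [integral_finset_sum _ (fun j _ => integrable_finset_sum _ (fun k _ => hYprodint n j k))]
    have hswap : ∀ j ∈ Finset.Icc 1 n, (∫ ω, ∑ k ∈ Finset.Icc 1 n, Y n j ω * Y n k ω ∂ℙ)
        = ∑ k ∈ Finset.Icc 1 n, ∫ ω, Y n j ω * Y n k ω ∂ℙ :=
      fun j _ => integral_finset_sum _ (fun k _ => hYprodint n j k)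
    rw [Finset.sum_congr rfl hswap]
    have hrow : ∀ j ∈ Finset.Icc 1 n,
        (∑ k ∈ Finset.Icc 1 n, ∫ ω, Y n j ω * Y n k ω ∂ℙ)
          ≤ (2*M)*(2*M) + 2*M*L*(2 * T n) := by
      intro j hjmem
      have hj := Finset.mem_Icc.1 hjmem
      have hsplitrow : ∑ k ∈ Finset.Icc 1 n, ∫ ω, Y n j ω * Y n k ω ∂ℙ
          = (∫ ω, Y n j ω * Y n j ω ∂ℙ)
            + ∑ k ∈ (Finset.Icc 1 n).erase j, ∫ ω, Y n j ω * Y n k ω ∂ℙ :=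
        (Finset.add_sum_erase _ _ hjmem).symm
      rw [hsplitrow]
      refine add_le_add (hdiag n j) ?_
      have herase : (Finset.Icc 1 n).erase j = Finset.Icc 1 (j-1) ∪ Finset.Icc (j+1) n := by
        ext k
        simp only [Finset.mem_erase, Finset.mem_Icc, Finset.mem_union]
        omega
      have hdisj : Disjoint (Finset.Icc 1 (j-1)) (Finset.Icc (j+1) n) := by
        rw [Finset.disjoint_left]
        intro k hk1 hk2
        simp only [Finset.mem_Icc] at hk1 hk2
        omega
      rw [herase, Finset.sum_union hdisj]
      have hlow : ∑ k ∈ Finset.Icc 1 (j-1), ∫ ω, Y n j ω * Y n k ω ∂ℙ ≤ 2*M*L * T n := by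
        calc ∑ k ∈ Finset.Icc 1 (j-1), ∫ ω, Y n j ω * Y n k ω ∂ℙ
            ≤ ∑ k ∈ Finset.Icc 1 (j-1), 2*M*L*τ (j - k) := by
              refine Finset.sum_le_sum (fun k hk => ?_)
              have hk' := Finset.mem_Icc.1 hk
              have hYcomm : (fun ω => Y n j ω * Y n k ω) = fun ω => Y n k ω * Y n j ω := by
                funext ω; ring
              rw [hYcomm]
              exact hcov n k j (by omega) (by omega) (by omega)
          _ = 2*M*L * ∑ k ∈ Finset.Icc 1 (j-1), τ (j - k) := by rw [Finset.mul_sum]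
          _ ≤ 2*M*L * T n :=
              mul_le_mul_of_nonneg_left (wlln_sum_tau_lt τ hτ0 j n (by omega)) (by positivity)
      have hhigh : ∑ k ∈ Finset.Icc (j+1) n, ∫ ω, Y n j ω * Y n k ω ∂ℙ ≤ 2*M*L * T n := by
        calc ∑ k ∈ Finset.Icc (j+1) n, ∫ ω, Y n j ω * Y n k ω ∂ℙ
            ≤ ∑ k ∈ Finset.Icc (j+1) n, 2*M*L*τ (k - j) := by
              refine Finset.sum_le_sum (fun k hk => ?_)
              have hk' := Finset.mem_Icc.1 hk
              exact hcov n j k (by omega) (by omega) (by omega)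
          _ = 2*M*L * ∑ k ∈ Finset.Icc (j+1) n, τ (k - j) := by rw [Finset.mul_sum]
          _ ≤ 2*M*L * T n :=
              mul_le_mul_of_nonneg_left (wlln_sum_tau_gt τ hτ0 j n) (by positivity)
      calc (∑ k ∈ Finset.Icc 1 (j-1), ∫ ω, Y n j ω * Y n k ω ∂ℙ)
            + ∑ k ∈ Finset.Icc (j+1) n, ∫ ω, Y n j ω * Y n k ω ∂ℙ
          ≤ 2*M*L * T n + 2*M*L * T n := add_le_add hlow hhigh
        _ = 2*M*L*(2 * T n) := by ring
    calc ∑ j ∈ Finset.Icc 1 n, ∑ k ∈ Finset.Icc 1 n, ∫ ω, Y n j ω * Y n k ω ∂ℙ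
        ≤ ∑ _j ∈ Finset.Icc 1 n, ((2*M)*(2*M) + 2*M*L*(2 * T n)) := Finset.sum_le_sum hrow
      _ = (n:ℝ) * ((2*M)*(2*M) + 2*M*L*(2 * T n)) := by
          rw [Finset.sum_const, Nat.card_Icc]
          simp only [nsmul_eq_mul, Nat.add_sub_cancel]
  set β : ℕ → ℝ := fun n => (n:ℝ)⁻¹ * ((2*M)*(2*M)) + 2*M*L*(2 * ((n:ℝ)⁻¹ * T n)) with hβdef
  have hβnonneg : ∀ n, 0 ≤ β n := by
    intro n
    refine add_nonneg (by positivity) ?_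
    refine mul_nonneg (by positivity) (mul_nonneg (by norm_num) ?_)
    exact mul_nonneg (by positivity) (hT0 n)
  have hA2 : ∀ n : ℕ, 1 ≤ n →
      ∫ ω, ((n:ℝ)⁻¹ * ∑ k ∈ Finset.Icc 1 n, Y n k ω)^2 ∂ℙ ≤ β n := by
    intro n hn
    have hne : (n:ℝ) ≠ 0 := Nat.cast_ne_zero.2 (by omega)
    have h1 : (fun ω => ((n:ℝ)⁻¹ * ∑ k ∈ Finset.Icc 1 n, Y n k ω)^2)
        = fun ω => ((n:ℝ)⁻¹)^2 * (∑ k ∈ Finset.Icc 1 n, Y n k ω)^2 := by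
      funext ω; ring
    rw [h1, integral_const_mul]
    calc ((n:ℝ)⁻¹)^2 * ∫ ω, (∑ k ∈ Finset.Icc 1 n, Y n k ω)^2 ∂ℙ
        ≤ ((n:ℝ)⁻¹)^2 * ((n:ℝ) * ((2*M)*(2*M) + 2*M*L*(2 * T n))) :=
          mul_le_mul_of_nonneg_left (hsum2 n) (by positivity)
      _ = β n := by
          simp only [hβdef]
          field_simp
  -- β tends to zero
  have hτ1 : Tendsto (fun i : ℕ => τ (1 + i)) atTop (nhds 0) := by
    have h2 := hτ.comp (tendsto_add_atTop_nat 1)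
    exact h2.congr (fun i => by simp [Function.comp, Nat.add_comm])
  have hTlim : Tendsto (fun n : ℕ => (n:ℝ)⁻¹ * T n) atTop (nhds 0) := by
    have hc := hτ1.cesaro
    refine hc.congr (fun n => ?_)
    congr 1
    simp only [hTdef]
    rw [← Finset.Ico_add_one_right_eq_Icc, Finset.sum_Ico_eq_sum_range]
    simp
  have hβlim : Tendsto β atTop (nhds 0) := by
    have h1 : Tendsto (fun n : ℕ => (n:ℝ)⁻¹ * ((2*M)*(2*M))) atTop (nhds 0) := by
      have h := tendsto_const_div_atTop_nhds_zero_nat ((2*M)*(2*M))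
      exact h.congr (fun n => by rw [div_eq_mul_inv, mul_comm])
    have h2 : Tendsto (fun n : ℕ => 2*M*L*(2 * ((n:ℝ)⁻¹ * T n))) atTop (nhds 0) := by
      have h := ((hTlim.const_mul 2).const_mul (2*M*L))
      simpa using h
    simpa using h1.add h2
  -- Chebyshev for the bounded part
  have hPA : ∀ n : ℕ, 1 ≤ n → ℙ {ω | ε/2 ≤ |(n:ℝ)⁻¹ * ∑ k ∈ Finset.Icc 1 n, Y n k ω|}
      ≤ ENNReal.ofReal (β n / (ε/2)^2) := by
    intro n hn
    have hne : (n:ℝ) ≠ 0 := Nat.cast_ne_zero.2 (by omega)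
    have hAmeas : Measurable (fun ω => (n:ℝ)⁻¹ * ∑ k ∈ Finset.Icc 1 n, Y n k ω) :=
      (Finset.measurable_sum _ (fun k _ => hYmeas n k)).const_mul _
    have hAbdd : ∀ ω, |(n:ℝ)⁻¹ * ∑ k ∈ Finset.Icc 1 n, Y n k ω| ≤ 2*M := by
      intro ω
      rw [abs_mul, abs_inv, Nat.abs_cast]
      have h1 : |∑ k ∈ Finset.Icc 1 n, Y n k ω| ≤ (n:ℝ) * (2*M) := by
        refine le_trans (Finset.abs_sum_le_sum_abs _ _) ?_
        calc ∑ k ∈ Finset.Icc 1 n, |Y n k ω| ≤ ∑ _k ∈ Finset.Icc 1 n, (2*M) :=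
              Finset.sum_le_sum (fun k _ => hYbdd n k ω)
          _ = (n:ℝ) * (2*M) := by
              rw [Finset.sum_const, Nat.card_Icc]; simp [nsmul_eq_mul]
      calc ((n:ℝ))⁻¹ * |∑ k ∈ Finset.Icc 1 n, Y n k ω| ≤ ((n:ℝ))⁻¹ * ((n:ℝ) * (2*M)) :=
            mul_le_mul_of_nonneg_left h1 (by positivity)
        _ = 2*M := by field_simp
    have hA2int : Integrable (fun ω => ((n:ℝ)⁻¹ * ∑ k ∈ Finset.Icc 1 n, Y n k ω)^2) ℙ := by
      refine Integrable.mono' (integrable_const ((2*M)^2))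
        ((hAmeas.pow_const 2).aestronglyMeasurable)
        (Filter.Eventually.of_forall fun ω => ?_)
      rw [Real.norm_eq_abs, abs_of_nonneg (sq_nonneg _)]
      calc ((n:ℝ)⁻¹ * ∑ k ∈ Finset.Icc 1 n, Y n k ω)^2
          = |(n:ℝ)⁻¹ * ∑ k ∈ Finset.Icc 1 n, Y n k ω|^2 := (sq_abs _).symm
        _ ≤ (2*M)^2 := pow_le_pow_left₀ (abs_nonneg _) (hAbdd ω) 2
    have hm := mul_meas_ge_le_integral_of_nonneg
      (Filter.Eventually.of_forall (fun ω => sq_nonneg ((n:ℝ)⁻¹ * ∑ k ∈ Finset.Icc 1 n, Y n k ω)))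
      hA2int ((ε/2)^2)
    have hsub : {ω | ε/2 ≤ |(n:ℝ)⁻¹ * ∑ k ∈ Finset.Icc 1 n, Y n k ω|}
        ⊆ {ω | (ε/2)^2 ≤ ((n:ℝ)⁻¹ * ∑ k ∈ Finset.Icc 1 n, Y n k ω)^2} := by
      intro ω hω
      simp only [Set.mem_setOf_eq] at hω ⊢
      calc (ε/2)^2 ≤ |(n:ℝ)⁻¹ * ∑ k ∈ Finset.Icc 1 n, Y n k ω|^2 :=
            pow_le_pow_left₀ (by positivity) hω 2
        _ = ((n:ℝ)⁻¹ * ∑ k ∈ Finset.Icc 1 n, Y n k ω)^2 := sq_abs _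
    have hεq : (0:ℝ) < (ε/2)^2 := by positivity
    have h1 : (ℙ {ω | ε/2 ≤ |(n:ℝ)⁻¹ * ∑ k ∈ Finset.Icc 1 n, Y n k ω|}).toReal
        ≤ β n / (ε/2)^2 := by
      rw [le_div_iff₀ hεq]
      have h2 : (ℙ {ω | ε/2 ≤ |(n:ℝ)⁻¹ * ∑ k ∈ Finset.Icc 1 n, Y n k ω|}).toReal
          ≤ (ℙ {ω | (ε/2)^2 ≤ ((n:ℝ)⁻¹ * ∑ k ∈ Finset.Icc 1 n, Y n k ω)^2}).toReal :=
        ENNReal.toReal_mono (measure_ne_top _ _) (measure_mono hsub)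
      calc (ℙ {ω | ε/2 ≤ |(n:ℝ)⁻¹ * ∑ k ∈ Finset.Icc 1 n, Y n k ω|}).toReal * (ε/2)^2
          ≤ (ℙ {ω | (ε/2)^2 ≤ ((n:ℝ)⁻¹ * ∑ k ∈ Finset.Icc 1 n, Y n k ω)^2}).toReal * (ε/2)^2 :=
            mul_le_mul_of_nonneg_right h2 hεq.le
        _ = (ε/2)^2 * (ℙ {ω | (ε/2)^2
              ≤ ((n:ℝ)⁻¹ * ∑ k ∈ Finset.Icc 1 n, Y n k ω)^2}).toReal := mul_comm _ _
        _ ≤ ∫ ω, ((n:ℝ)⁻¹ * ∑ k ∈ Finset.Icc 1 n, Y n k ω)^2 ∂ℙ := hm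
        _ ≤ β n := hA2 n hn
    exact (ENNReal.le_ofReal_iff_toReal_le (measure_ne_top _ _)
      (div_nonneg (hβnonneg n) hεq.le)).2 h1
  -- Markov for the remainder
  have hPB : ∀ n : ℕ, 1 ≤ n →
      ℙ {ω | ε/2 ≤ |(n:ℝ)⁻¹ * ∑ k ∈ Finset.Icc 1 n, (g n (X n k ω) - Y n k ω)|}
        ≤ ENNReal.ofReal (δ'/4) := by
    intro n hn
    have hne : (n:ℝ) ≠ 0 := Nat.cast_ne_zero.2 (by omega)
    have huint : ∀ k, 1 ≤ k → k ≤ n →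
        Integrable (fun ω => g n (X n k ω) - Y n k ω) ℙ :=
      fun k hk1 hkn => (hgkint n k hk1 hkn).sub (hYint n k)
    have huL1 : ∀ k, 1 ≤ k → k ≤ n →
        ∫ ω, |g n (X n k ω) - Y n k ω| ∂ℙ ≤ 6 * ε₀ := by
      intro k hk1 hkn
      have hptw : ∀ ω, |g n (X n k ω) - Y n k ω|
          ≤ |g n (X n k ω) - b n (X n k ω)| + |c n| := by
        intro ω
        have heq : g n (X n k ω) - Y n k ω = (g n (X n k ω) - b n (X n k ω)) + c n := by
          simp only [hYdef]; ring
        rw [heq]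
        exact abs_add_le _ _
      calc ∫ ω, |g n (X n k ω) - Y n k ω| ∂ℙ
          ≤ ∫ ω, (|g n (X n k ω) - b n (X n k ω)| + |c n|) ∂ℙ :=
            integral_mono (huint k hk1 hkn).abs
              ((((hgkint n k hk1 hkn).sub (hbint n k)).abs).add (integrable_const _)) hptw
        _ = (∫ ω, |g n (X n k ω) - b n (X n k ω)| ∂ℙ) + ∫ _ω, |c n| ∂ℙ :=
            integral_add (((hgkint n k hk1 hkn).sub (hbint n k)).abs) (integrable_const _)
        _ = (∫ ω, |g n (X n k ω) - b n (X n k ω)| ∂ℙ) + |c n| := by simp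
        _ ≤ 3 * ε₀ + 3 * ε₀ := add_le_add (hrk n k hk1 hkn) (hcbound n)
        _ = 6 * ε₀ := by ring
    have hsumint : Integrable (fun ω => ∑ k ∈ Finset.Icc 1 n, (g n (X n k ω) - Y n k ω)) ℙ :=
      integrable_finset_sum _ (fun k hk => huint k (Finset.mem_Icc.1 hk).1 (Finset.mem_Icc.1 hk).2)
    have hBint : Integrable
        (fun ω => (n:ℝ)⁻¹ * ∑ k ∈ Finset.Icc 1 n, (g n (X n k ω) - Y n k ω)) ℙ :=
      hsumint.const_mul _
    have hBL1 : ∫ ω, |(n:ℝ)⁻¹ * ∑ k ∈ Finset.Icc 1 n, (g n (X n k ω) - Y n k ω)| ∂ℙ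
        ≤ 6 * ε₀ := by
      have h1 : (fun ω => |(n:ℝ)⁻¹ * ∑ k ∈ Finset.Icc 1 n, (g n (X n k ω) - Y n k ω)|)
          = fun ω => (n:ℝ)⁻¹ * |∑ k ∈ Finset.Icc 1 n, (g n (X n k ω) - Y n k ω)| := by
        funext ω; rw [abs_mul, abs_inv, Nat.abs_cast]
      rw [h1, integral_const_mul]
      have h2 : ∫ ω, |∑ k ∈ Finset.Icc 1 n, (g n (X n k ω) - Y n k ω)| ∂ℙ
          ≤ ∑ k ∈ Finset.Icc 1 n, ∫ ω, |g n (X n k ω) - Y n k ω| ∂ℙ := by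
        calc ∫ ω, |∑ k ∈ Finset.Icc 1 n, (g n (X n k ω) - Y n k ω)| ∂ℙ
            ≤ ∫ ω, ∑ k ∈ Finset.Icc 1 n, |g n (X n k ω) - Y n k ω| ∂ℙ :=
              integral_mono hsumint.abs
                (integrable_finset_sum _ (fun k hk =>
                  (huint k (Finset.mem_Icc.1 hk).1 (Finset.mem_Icc.1 hk).2).abs))
                (fun ω => Finset.abs_sum_le_sum_abs _ _)
          _ = ∑ k ∈ Finset.Icc 1 n, ∫ ω, |g n (X n k ω) - Y n k ω| ∂ℙ :=
              integral_finset_sum _ (fun k hk =>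
                (huint k (Finset.mem_Icc.1 hk).1 (Finset.mem_Icc.1 hk).2).abs)
      calc (n:ℝ)⁻¹ * ∫ ω, |∑ k ∈ Finset.Icc 1 n, (g n (X n k ω) - Y n k ω)| ∂ℙ
          ≤ (n:ℝ)⁻¹ * ∑ k ∈ Finset.Icc 1 n, ∫ ω, |g n (X n k ω) - Y n k ω| ∂ℙ :=
            mul_le_mul_of_nonneg_left h2 (by positivity)
        _ ≤ (n:ℝ)⁻¹ * ∑ _k ∈ Finset.Icc 1 n, (6 * ε₀) := by
            refine mul_le_mul_of_nonneg_left (Finset.sum_le_sum (fun k hk =>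
              huL1 k (Finset.mem_Icc.1 hk).1 (Finset.mem_Icc.1 hk).2)) (by positivity)
        _ = (n:ℝ)⁻¹ * ((n:ℝ) * (6 * ε₀)) := by
            rw [Finset.sum_const, Nat.card_Icc]; simp [nsmul_eq_mul]
        _ = 6 * ε₀ := by field_simp
    have hm := mul_meas_ge_le_integral_of_nonneg
      (Filter.Eventually.of_forall (fun ω => abs_nonneg
        ((n:ℝ)⁻¹ * ∑ k ∈ Finset.Icc 1 n, (g n (X n k ω) - Y n k ω))))
      hBint.abs (ε/2)
    have hεh : (0:ℝ) < ε/2 := by positivity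
    have h1 : (ℙ {ω | ε/2 ≤ |(n:ℝ)⁻¹ * ∑ k ∈ Finset.Icc 1 n, (g n (X n k ω) - Y n k ω)|}).toReal
        ≤ δ'/4 := by
      have h3 : (ℙ {ω | ε/2 ≤ |(n:ℝ)⁻¹
          * ∑ k ∈ Finset.Icc 1 n, (g n (X n k ω) - Y n k ω)|}).toReal ≤ (6 * ε₀) / (ε/2) := by
        rw [le_div_iff₀ hεh]
        calc (ℙ {ω | ε/2 ≤ |(n:ℝ)⁻¹
              * ∑ k ∈ Finset.Icc 1 n, (g n (X n k ω) - Y n k ω)|}).toReal * (ε/2)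
            = (ε/2) * (ℙ {ω | ε/2 ≤ |(n:ℝ)⁻¹
              * ∑ k ∈ Finset.Icc 1 n, (g n (X n k ω) - Y n k ω)|}).toReal := mul_comm _ _
          _ ≤ ∫ ω, |(n:ℝ)⁻¹ * ∑ k ∈ Finset.Icc 1 n, (g n (X n k ω) - Y n k ω)| ∂ℙ := hm
          _ ≤ 6 * ε₀ := hBL1
      refine h3.trans (le_of_eq ?_)
      rw [hε₀def]
      field_simp
      ring
    exact (ENNReal.le_ofReal_iff_toReal_le (measure_ne_top _ _) (by positivity)).2 h1
  -- assemble
  have hfrac : Tendsto (fun n => β n / (ε/2)^2) atTop (nhds 0) := by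
    simpa using hβlim.div_const ((ε/2)^2)
  have hev : ∀ᶠ n in atTop, β n / (ε/2)^2 ≤ δ'/2 :=
    hfrac.eventually (eventually_le_nhds (by positivity))
  rw [Filter.eventually_atTop] at hev
  obtain ⟨N, hN⟩ := hev
  refine ⟨max N 1, fun n hn => ?_⟩
  have hn1 : 1 ≤ n := le_trans (le_max_right _ _) hn
  have hnN : N ≤ n := le_trans (le_max_left _ _) hn
  have hdecomp : ∀ ω : Ω, (n:ℝ)⁻¹ * ∑ k ∈ Finset.Icc 1 n, g n (X n k ω)
      = ((n:ℝ)⁻¹ * ∑ k ∈ Finset.Icc 1 n, Y n k ω)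
        + (n:ℝ)⁻¹ * ∑ k ∈ Finset.Icc 1 n, (g n (X n k ω) - Y n k ω) := by
    intro ω
    rw [← mul_add, ← Finset.sum_add_distrib]
    congr 1
    exact Finset.sum_congr rfl (fun k _ => by ring)
  have hsub : {ω | ε < |(n:ℝ)⁻¹ * ∑ k ∈ Finset.Icc 1 n, g n (X n k ω)|}
      ⊆ {ω | ε/2 ≤ |(n:ℝ)⁻¹ * ∑ k ∈ Finset.Icc 1 n, Y n k ω|}
        ∪ {ω | ε/2 ≤ |(n:ℝ)⁻¹ * ∑ k ∈ Finset.Icc 1 n, (g n (X n k ω) - Y n k ω)|} := by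
    intro ω hω
    simp only [Set.mem_setOf_eq, Set.mem_union] at hω ⊢
    by_contra hc
    push_neg at hc
    obtain ⟨h1, h2⟩ := hc
    rw [hdecomp ω] at hω
    have h3 := abs_add_le ((n:ℝ)⁻¹ * ∑ k ∈ Finset.Icc 1 n, Y n k ω)
      ((n:ℝ)⁻¹ * ∑ k ∈ Finset.Icc 1 n, (g n (X n k ω) - Y n k ω))
    linarith
  calc ℙ {ω | ε < |(n:ℝ)⁻¹ * ∑ k ∈ Finset.Icc 1 n, g n (X n k ω)|}
      ≤ ℙ ({ω | ε/2 ≤ |(n:ℝ)⁻¹ * ∑ k ∈ Finset.Icc 1 n, Y n k ω|}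
        ∪ {ω | ε/2 ≤ |(n:ℝ)⁻¹ * ∑ k ∈ Finset.Icc 1 n, (g n (X n k ω) - Y n k ω)|}) :=
        measure_mono hsub
    _ ≤ ℙ {ω | ε/2 ≤ |(n:ℝ)⁻¹ * ∑ k ∈ Finset.Icc 1 n, Y n k ω|}
        + ℙ {ω | ε/2 ≤ |(n:ℝ)⁻¹ * ∑ k ∈ Finset.Icc 1 n, (g n (X n k ω) - Y n k ω)|} :=
        measure_union_le _ _
    _ ≤ ENNReal.ofReal (β n / (ε/2)^2) + ENNReal.ofReal (δ'/4) :=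
        add_le_add (hPA n hn1) (hPB n hn1)
    _ ≤ ENNReal.ofReal (δ'/2) + ENNReal.ofReal (δ'/4) :=
        add_le_add (ENNReal.ofReal_le_ofReal (hN n hnN)) le_rfl
    _ = ENNReal.ofReal (δ'/2 + δ'/4) := (ENNReal.ofReal_add (by positivity) (by positivity)).symm
    _ ≤ ENNReal.ofReal δ' := ENNReal.ofReal_le_ofReal (by linarith)
    _ ≤ δ := hδ'le
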